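/- Let H be a real Hilbert space, let α > 0, ε > 0, γ > 0, and let φ(x) = α + max(‖x‖ − ε, 0) be the abstract Vapnik function. Let σ ∈ ℝ and x ∈ H. (a) If σ ≤ γ(α − ε) and ‖x‖ > γ, then prox_{γφ̃}(σ,x) = (0, (1 − γ/‖x‖) x). (b) If σ > γ(α − ε) and ‖x‖ ≥ εσ + γ(1 + ε(ε − α)), then prox_{γφ̃}(σ,x) = (σ + γ(ε − α), (1 − γ/‖x‖) x). (c) If σ + ε‖x‖ > γα and ε(σ − γα) < ‖x‖ < εσ + γ(1 + ε(ε − α)), then prox_{γφ̃}(σ,x) = ((σ + ε‖x‖ − γα)/(1 + ε²)) · (1, (ε/‖x‖) x). -/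

import Mathlib

noncomputable section

/-- The perspective of a (finite-valued) function `φ : H → ℝ`: it equals
`σ φ(x/σ)` for `σ > 0`, the recession function
`(rec φ)(x) = sup_y (φ(x+y) − φ(y))` for `σ = 0`, and `+∞` for `σ < 0`. -/
def perspR {H : Type*} [NormedAddCommGroup H] [NormedSpace ℝ H]
    (φ : H → ℝ) (p : ℝ × H) : EReal :=
  if 0 < p.1 then ((p.1 * φ (p.1⁻¹ • p.2) : ℝ) : EReal)
  else if p.1 = 0 then ⨆ y : H, ((φ (p.2 + y) - φ y : ℝ) : EReal)
  else ⊤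

/-- `p` is the proximal point of `ψ : ℝ × H → (−∞,∞]` at `z`, i.e. `p` minimizes
`y ↦ ψ(y) + ½‖z − y‖²` (the squared norm on `ℝ × H` being the Hilbert one). -/
def IsProx {H : Type*} [NormedAddCommGroup H]
    (ψ : ℝ × H → EReal) (z p : ℝ × H) : Prop :=
  ∀ y : ℝ × H,
    ψ p + ((((z.1 - p.1) ^ 2 + ‖z.2 - p.2‖ ^ 2) / 2 : ℝ) : EReal) ≤
      ψ y + ((((z.1 - y.1) ^ 2 + ‖z.2 - y.2‖ ^ 2) / 2 : ℝ) : EReal)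

lemma persp_eq {H : Type*} [NormedAddCommGroup H] [NormedSpace ℝ H]
    (α ε : ℝ) (hε : 0 < ε) (φ : H → ℝ) (hφ : ∀ v : H, φ v = α + max (‖v‖ - ε) 0)
    (w : ℝ × H) (hw : 0 ≤ w.1) :
    perspR φ w = ((max (α * w.1) ((α - ε) * w.1 + ‖w.2‖) : ℝ) : EReal) := by
  rcases hw.lt_or_eq with hs | hs
  · rw [perspR, if_pos hs]
    norm_cast
    have hns : ‖w.1⁻¹ • w.2‖ = ‖w.2‖ / w.1 := by
      rw [norm_smul, norm_inv, Real.norm_eq_abs, abs_of_pos hs, div_eq_inv_mul]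
    rw [hφ, hns]
    rcases le_total ‖w.2‖ (ε * w.1) with h | h
    · rw [max_eq_right (by rw [sub_nonpos, div_le_iff₀ hs]; linarith),
        max_eq_left (by nlinarith)]
      ring
    · rw [max_eq_left (by rw [sub_nonneg, le_div_iff₀ hs]; linarith),
        max_eq_right (by nlinarith)]
      field_simp
      ring
  · have hs' : w.1 = 0 := hs.symm
    rw [perspR, if_neg (by rw [hs']; exact lt_irrefl 0), if_pos hs']
    rw [hs', mul_zero, mul_zero, zero_add, max_eq_right (norm_nonneg _)]
    apply le_antisymm
    · apply iSup_le; intro y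
      apply EReal.coe_le_coe_iff.mpr
      rw [hφ, hφ]
      have h1 := norm_add_le w.2 y
      have h2 : max (‖w.2 + y‖ - ε) 0 ≤ ‖w.2‖ + max (‖y‖ - ε) 0 :=
        max_le (by linarith [le_max_left (‖y‖ - ε) 0])
          (add_nonneg (norm_nonneg _) (le_max_right _ _))
      linarith
    · by_cases hv : w.2 = 0
      · refine le_trans ?_ (le_iSup (fun y => ((φ (w.2 + y) - φ y : ℝ) : EReal)) 0)
        apply EReal.coe_le_coe_iff.mpr
        simp [hv, hφ]
      · refine le_trans ?_
          (le_iSup (fun y => ((φ (w.2 + y) - φ y : ℝ) : EReal)) ((ε / ‖w.2‖) • w.2))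
        apply EReal.coe_le_coe_iff.mpr
        have hv' : 0 < ‖w.2‖ := norm_pos_iff.mpr hv
        have e1 : ‖(ε / ‖w.2‖) • w.2‖ = ε := by
          rw [norm_smul, Real.norm_eq_abs, abs_of_pos (div_pos hε hv'),
            div_mul_cancel₀ _ hv'.ne']
        have e2 : ‖w.2 + (ε / ‖w.2‖) • w.2‖ = ‖w.2‖ + ε := by
          have e3 : w.2 + (ε / ‖w.2‖) • w.2 = (1 + ε / ‖w.2‖) • w.2 := by
            rw [add_smul, one_smul]
          rw [e3, norm_smul, Real.norm_eq_abs, abs_of_pos (by positivity), add_mul,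
            one_mul, div_mul_cancel₀ _ hv'.ne']
        rw [hφ, hφ, e1, e2]
        have e4 : ‖w.2‖ + ε - ε = ‖w.2‖ := by ring
        rw [e4, sub_self, max_eq_left (norm_nonneg _), max_self]
        linarith

def vF {H : Type*} [NormedAddCommGroup H] (α ε γ σ : ℝ) (x : H) (y : ℝ × H) : ℝ :=
  γ * max (α * y.1) ((α - ε) * y.1 + ‖y.2‖) + ((σ - y.1) ^ 2 + ‖x - y.2‖ ^ 2) / 2

lemma isProx_iff {H : Type*} [NormedAddCommGroup H] [NormedSpace ℝ H]
    (α ε γ : ℝ) (hε : 0 < ε) (hγ : 0 < γ)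
    (φ : H → ℝ) (hφ : ∀ v : H, φ v = α + max (‖v‖ - ε) 0)
    (σ : ℝ) (x : H) (p : ℝ × H) :
    IsProx (fun w => (γ : EReal) * perspR φ w) (σ, x) p ↔
      (0 ≤ p.1 ∧ ∀ y : ℝ × H, 0 ≤ y.1 → vF α ε γ σ x p ≤ vF α ε γ σ x y) := by
  have key : ∀ w : ℝ × H, 0 ≤ w.1 →
      (γ : EReal) * perspR φ w + ((((σ - w.1) ^ 2 + ‖x - w.2‖ ^ 2) / 2 : ℝ) : EReal)
        = ((vF α ε γ σ x w : ℝ) : EReal) := by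
    intro w hw
    rw [persp_eq α ε hε φ hφ w hw, ← EReal.coe_mul, ← EReal.coe_add]
    rfl
  constructor
  · intro h
    have hp : 0 ≤ p.1 := by
      by_contra hp
      push_neg at hp
      have h0 : (γ : EReal) * perspR φ p
            + ((((σ - p.1) ^ 2 + ‖x - p.2‖ ^ 2) / 2 : ℝ) : EReal)
          ≤ (γ : EReal) * perspR φ ((0 : ℝ), (0 : H))
            + ((((σ - 0) ^ 2 + ‖x - 0‖ ^ 2) / 2 : ℝ) : EReal) := h ((0 : ℝ), (0 : H))
      have htop : perspR φ p = ⊤ := by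
        rw [perspR, if_neg (not_lt.mpr hp.le), if_neg hp.ne]
      rw [htop, EReal.coe_mul_top_of_pos hγ,
        key ((0 : ℝ), (0 : H)) le_rfl] at h0
      simp at h0
    refine ⟨hp, fun y hy => ?_⟩
    have h0 : (γ : EReal) * perspR φ p
          + ((((σ - p.1) ^ 2 + ‖x - p.2‖ ^ 2) / 2 : ℝ) : EReal)
        ≤ (γ : EReal) * perspR φ y
          + ((((σ - y.1) ^ 2 + ‖x - y.2‖ ^ 2) / 2 : ℝ) : EReal) := h y
    rw [key p hp, key y hy] at h0
    exact EReal.coe_le_coe_iff.mp h0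
  · rintro ⟨hp, hmin⟩ y
    by_cases hy : 0 ≤ y.1
    · show (γ : EReal) * perspR φ p
          + ((((σ - p.1) ^ 2 + ‖x - p.2‖ ^ 2) / 2 : ℝ) : EReal)
        ≤ (γ : EReal) * perspR φ y
          + ((((σ - y.1) ^ 2 + ‖x - y.2‖ ^ 2) / 2 : ℝ) : EReal)
      rw [key p hp, key y hy]
      exact EReal.coe_le_coe_iff.mpr (hmin y hy)
    · push_neg at hy
      show (γ : EReal) * perspR φ p
          + ((((σ - p.1) ^ 2 + ‖x - p.2‖ ^ 2) / 2 : ℝ) : EReal)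
        ≤ (γ : EReal) * perspR φ y
          + ((((σ - y.1) ^ 2 + ‖x - y.2‖ ^ 2) / 2 : ℝ) : EReal)
      have htop : perspR φ y = ⊤ := by
        rw [perspR, if_neg (not_lt.mpr hy.le), if_neg hy.ne]
      rw [htop, EReal.coe_mul_top_of_pos hγ, EReal.top_add_coe]
      exact le_top

set_option maxHeartbeats 1600000 in
lemma uniq_min {H : Type*} [NormedAddCommGroup H] [InnerProductSpace ℝ H]
    (α ε γ σ : ℝ) (hγ : 0 ≤ γ) (x : H) (p q : ℝ × H) (hp : 0 ≤ p.1) (hq : 0 ≤ q.1)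
    (hpm : ∀ y : ℝ × H, 0 ≤ y.1 → vF α ε γ σ x p ≤ vF α ε γ σ x y)
    (hqm : ∀ y : ℝ × H, 0 ≤ y.1 → vF α ε γ σ x q ≤ vF α ε γ σ x y) : p = q := by
  have hm : (0 : ℝ) ≤ (((p.1 + q.1) / 2, (2⁻¹ : ℝ) • (p.2 + q.2)) : ℝ × H).1 := by
    show (0:ℝ) ≤ (p.1 + q.1) / 2
    linarith
  have h1 : vF α ε γ σ x p ≤
      γ * max (α * ((p.1 + q.1) / 2)) ((α - ε) * ((p.1 + q.1) / 2) + ‖(2⁻¹ : ℝ) • (p.2 + q.2)‖)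
        + ((σ - (p.1 + q.1) / 2) ^ 2 + ‖x - (2⁻¹ : ℝ) • (p.2 + q.2)‖ ^ 2) / 2 :=
    hpm (((p.1 + q.1) / 2, (2⁻¹ : ℝ) • (p.2 + q.2)) : ℝ × H) hm
  have h2 : vF α ε γ σ x q ≤
      γ * max (α * ((p.1 + q.1) / 2)) ((α - ε) * ((p.1 + q.1) / 2) + ‖(2⁻¹ : ℝ) • (p.2 + q.2)‖)
        + ((σ - (p.1 + q.1) / 2) ^ 2 + ‖x - (2⁻¹ : ℝ) • (p.2 + q.2)‖ ^ 2) / 2 :=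
    hqm (((p.1 + q.1) / 2, (2⁻¹ : ℝ) • (p.2 + q.2)) : ℝ × H) hm
  have hnorm : ‖x - (2⁻¹ : ℝ) • (p.2 + q.2)‖ ^ 2
      = (2 * ‖x - p.2‖ ^ 2 + 2 * ‖x - q.2‖ ^ 2 - ‖p.2 - q.2‖ ^ 2) / 4 := by
    have hpar := parallelogram_law_with_norm ℝ (x - p.2) (x - q.2)
    have e1 : (x - p.2) + (x - q.2) = (2 : ℝ) • (x - (2⁻¹ : ℝ) • (p.2 + q.2)) := by
      module
    have e2 : (x - p.2) - (x - q.2) = -(p.2 - q.2) := by abel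
    rw [e1, e2, norm_neg, norm_smul] at hpar
    simp only [Real.norm_ofNat] at hpar
    nlinarith [hpar]
  have hm2 : ‖(2⁻¹ : ℝ) • (p.2 + q.2)‖ ≤ (‖p.2‖ + ‖q.2‖) / 2 := by
    rw [norm_smul]
    have := norm_add_le p.2 q.2
    simp only [norm_inv, Real.norm_ofNat]
    linarith
  have hGm : max (α * ((p.1 + q.1) / 2)) ((α - ε) * ((p.1 + q.1) / 2) + ‖(2⁻¹ : ℝ) • (p.2 + q.2)‖)
      ≤ (max (α * p.1) ((α - ε) * p.1 + ‖p.2‖) + max (α * q.1) ((α - ε) * q.1 + ‖q.2‖)) / 2 := by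
    apply max_le
    · have hl1 := le_max_left (α * p.1) ((α - ε) * p.1 + ‖p.2‖)
      have hl2 := le_max_left (α * q.1) ((α - ε) * q.1 + ‖q.2‖)
      linarith
    · have hl1 := le_max_right (α * p.1) ((α - ε) * p.1 + ‖p.2‖)
      have hl2 := le_max_right (α * q.1) ((α - ε) * q.1 + ‖q.2‖)
      linarith
  have hγG := mul_le_mul_of_nonneg_left hGm hγ
  simp only [vF] at h1 h2
  have hd : (p.1 - q.1) ^ 2 + ‖p.2 - q.2‖ ^ 2 ≤ 0 := by nlinarith [h1, h2, hnorm, hγG]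
  have e3 : (p.1 - q.1) ^ 2 = 0 :=
    le_antisymm (by nlinarith [sq_nonneg ‖p.2 - q.2‖]) (sq_nonneg _)
  have e4 : ‖p.2 - q.2‖ ^ 2 = 0 :=
    le_antisymm (by nlinarith [sq_nonneg (p.1 - q.1)]) (sq_nonneg _)
  have hd1 : p.1 = q.1 := by
    have := sq_eq_zero_iff.mp e3
    linarith
  have hd2 : p.2 = q.2 := by
    have h4 := sq_eq_zero_iff.mp e4
    rw [norm_eq_zero, sub_eq_zero] at h4
    exact h4
  exact Prod.ext hd1 hd2

lemma vf_lower {H : Type*} [NormedAddCommGroup H] (α ε γ σ : ℝ)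
    (x : H) (y : ℝ × H) :
    γ * max (α * y.1) ((α - ε) * y.1 + ‖y.2‖) + ((σ - y.1) ^ 2 + (‖x‖ - ‖y.2‖) ^ 2) / 2
      ≤ vF α ε γ σ x y := by
  have h := abs_norm_sub_norm_le x y.2
  have h2 : (‖x‖ - ‖y.2‖) ^ 2 ≤ ‖x - y.2‖ ^ 2 := by
    calc (‖x‖ - ‖y.2‖) ^ 2 = |‖x‖ - ‖y.2‖| ^ 2 := (sq_abs _).symm
    _ ≤ ‖x - y.2‖ ^ 2 := pow_le_pow_left₀ (abs_nonneg _) h 2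
  simp only [vF]
  linarith

lemma key_c (α ε γ r τ t n M : ℝ) (hγ : 0 < γ)
    (hB0 : 0 ≤ r - ε * τ) (hB1 : r - ε * τ ≤ γ)
    (hM1 : α * t ≤ M) (hM2 : (α - ε) * t + n ≤ M) :
    γ * (α * τ) + ((((1 + ε ^ 2) * τ + γ * α - ε * r) - τ) ^ 2 + (r - ε * τ) ^ 2) / 2
      ≤ γ * M + ((((1 + ε ^ 2) * τ + γ * α - ε * r) - t) ^ 2 + (r - n) ^ 2) / 2 := by
  nlinarith [mul_nonneg (sub_nonneg.mpr hB1) (sub_nonneg.mpr hM1),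
    mul_nonneg hB0 (sub_nonneg.mpr hM2), sq_nonneg (t - τ), sq_nonneg (n - ε * τ)]

lemma min_a {H : Type*} [NormedAddCommGroup H] [NormedSpace ℝ H]
    (α ε γ σ : ℝ) (hγ : 0 < γ) (x : H)
    (h1 : σ ≤ γ * (α - ε)) (h2 : γ < ‖x‖) :
    ∀ y : ℝ × H, 0 ≤ y.1 →
      vF α ε γ σ x ((0 : ℝ), (1 - γ / ‖x‖) • x) ≤ vF α ε γ σ x y := by
  have hr : 0 < ‖x‖ := hγ.trans h2
  have hc : γ / ‖x‖ ≤ 1 := (div_le_one hr).mpr h2.le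
  have hq2 : ‖(1 - γ / ‖x‖) • x‖ = ‖x‖ - γ := by
    rw [norm_smul, Real.norm_eq_abs, abs_of_nonneg (by linarith)]
    field_simp
  have hx2 : ‖x - (1 - γ / ‖x‖) • x‖ = γ := by
    have e : x - (1 - γ / ‖x‖) • x = (γ / ‖x‖) • x := by
      rw [sub_smul, one_smul]
      abel
    rw [e, norm_smul, Real.norm_eq_abs, abs_of_nonneg (by positivity),
      div_mul_cancel₀ _ hr.ne']
  intro y hy
  refine le_trans ?_ (vf_lower α ε γ σ x y)
  have hFq : vF α ε γ σ x ((0 : ℝ), (1 - γ / ‖x‖) • x)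
      = γ * (‖x‖ - γ) + (σ ^ 2 + γ ^ 2) / 2 := by
    show γ * max (α * 0) ((α - ε) * 0 + ‖(1 - γ / ‖x‖) • x‖)
        + ((σ - 0) ^ 2 + ‖x - (1 - γ / ‖x‖) • x‖ ^ 2) / 2 = _
    rw [hq2, hx2, mul_zero, mul_zero, zero_add, max_eq_right (by linarith)]
    ring
  rw [hFq]
  have hM := le_max_right (α * y.1) ((α - ε) * y.1 + ‖y.2‖)
  have hγM := mul_le_mul_of_nonneg_left hM hγ.le
  nlinarith [hγM, sq_nonneg (‖y.2‖ - (‖x‖ - γ)), mul_nonneg hy (sub_nonneg.mpr h1),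
    sq_nonneg y.1]

lemma min_b {H : Type*} [NormedAddCommGroup H] [NormedSpace ℝ H]
    (α ε γ σ : ℝ) (hε : 0 < ε) (hγ : 0 < γ) (x : H)
    (h1 : γ * (α - ε) < σ) (h2 : ε * σ + γ * (1 + ε * (ε - α)) ≤ ‖x‖) :
    ∀ y : ℝ × H, 0 ≤ y.1 →
      vF α ε γ σ x ((σ + γ * (ε - α) : ℝ), (1 - γ / ‖x‖) • x) ≤ vF α ε γ σ x y := by
  have hr : γ < ‖x‖ := by nlinarith
  have hr0 : 0 < ‖x‖ := hγ.trans hr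
  have hc : γ / ‖x‖ ≤ 1 := (div_le_one hr0).mpr hr.le
  have hq2 : ‖(1 - γ / ‖x‖) • x‖ = ‖x‖ - γ := by
    rw [norm_smul, Real.norm_eq_abs, abs_of_nonneg (by linarith)]
    field_simp
  have hx2 : ‖x - (1 - γ / ‖x‖) • x‖ = γ := by
    have e : x - (1 - γ / ‖x‖) • x = (γ / ‖x‖) • x := by
      rw [sub_smul, one_smul]
      abel
    rw [e, norm_smul, Real.norm_eq_abs, abs_of_nonneg (by positivity),
      div_mul_cancel₀ _ hr0.ne']
  intro y hy
  refine le_trans ?_ (vf_lower α ε γ σ x y)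
  have hFq : vF α ε γ σ x ((σ + γ * (ε - α) : ℝ), (1 - γ / ‖x‖) • x)
      = γ * ((α - ε) * (σ + γ * (ε - α)) + (‖x‖ - γ))
        + ((σ - (σ + γ * (ε - α))) ^ 2 + γ ^ 2) / 2 := by
    show γ * max (α * (σ + γ * (ε - α)))
          ((α - ε) * (σ + γ * (ε - α)) + ‖(1 - γ / ‖x‖) • x‖)
        + ((σ - (σ + γ * (ε - α))) ^ 2 + ‖x - (1 - γ / ‖x‖) • x‖ ^ 2) / 2 = _
    rw [hq2, hx2, max_eq_right (by nlinarith)]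
  rw [hFq]
  have hM := le_max_right (α * y.1) ((α - ε) * y.1 + ‖y.2‖)
  have hγM := mul_le_mul_of_nonneg_left hM hγ.le
  nlinarith [hγM, sq_nonneg (y.1 - (σ + γ * (ε - α))), sq_nonneg (‖y.2‖ - (‖x‖ - γ))]

lemma min_c {H : Type*} [NormedAddCommGroup H] [NormedSpace ℝ H]
    (α ε γ σ : ℝ) (hε : 0 < ε) (hγ : 0 < γ) (x : H)
    (h1 : γ * α < σ + ε * ‖x‖) (h2 : ε * (σ - γ * α) < ‖x‖)
    (h3 : ‖x‖ < ε * σ + γ * (1 + ε * (ε - α))) :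
    ∀ y : ℝ × H, 0 ≤ y.1 →
      vF α ε γ σ x ((σ + ε * ‖x‖ - γ * α) / (1 + ε ^ 2),
        ((σ + ε * ‖x‖ - γ * α) / (1 + ε ^ 2)) • ((ε / ‖x‖) • x)) ≤ vF α ε γ σ x y := by
  have hr : 0 < ‖x‖ := by
    nlinarith [mul_pos hε (show (0:ℝ) < σ + ε * ‖x‖ - γ * α by linarith), h2, sq_nonneg ε]
  have hden : (0:ℝ) < 1 + ε ^ 2 := by positivity
  set τ : ℝ := (σ + ε * ‖x‖ - γ * α) / (1 + ε ^ 2) with hτdef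
  have hτ_eq : τ * (1 + ε ^ 2) = σ + ε * ‖x‖ - γ * α := div_mul_cancel₀ _ hden.ne'
  have hτpos : 0 < τ := div_pos (by linarith) hden
  have hε_eq : ε * (τ * (1 + ε ^ 2)) = ε * (σ + ε * ‖x‖ - γ * α) := by rw [hτ_eq]
  have hB0 : 0 ≤ ‖x‖ - ε * τ := by nlinarith [hε_eq, h2, sq_nonneg ε]
  have hB1 : ‖x‖ - ε * τ ≤ γ := by nlinarith [hε_eq, h3, sq_nonneg ε]
  have hq2 : ‖τ • ((ε / ‖x‖) • x)‖ = ε * τ := by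
    rw [norm_smul, norm_smul, Real.norm_eq_abs, Real.norm_eq_abs, abs_of_pos hτpos,
      abs_of_pos (div_pos hε hr)]
    field_simp
  have hx2 : ‖x - τ • ((ε / ‖x‖) • x)‖ = ‖x‖ - ε * τ := by
    have e : x - τ • ((ε / ‖x‖) • x) = (1 - τ * (ε / ‖x‖)) • x := by
      rw [smul_smul, sub_smul, one_smul]
    have hle : τ * (ε / ‖x‖) ≤ 1 := by
      rw [mul_div_assoc']
      exact (div_le_one hr).mpr (by linarith)
    rw [e, norm_smul, Real.norm_eq_abs, abs_of_nonneg (by linarith)]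
    field_simp
  intro y hy
  refine le_trans ?_ (vf_lower α ε γ σ x y)
  have hFq : vF α ε γ σ x (τ, τ • ((ε / ‖x‖) • x))
      = γ * (α * τ) + ((σ - τ) ^ 2 + (‖x‖ - ε * τ) ^ 2) / 2 := by
    show γ * max (α * τ) ((α - ε) * τ + ‖τ • ((ε / ‖x‖) • x)‖)
        + ((σ - τ) ^ 2 + ‖x - τ • ((ε / ‖x‖) • x)‖ ^ 2) / 2 = _
    rw [hq2, hx2, show (α - ε) * τ + ε * τ = α * τ by ring, max_self]
  rw [hFq]
  have hσ : σ = (1 + ε ^ 2) * τ + γ * α - ε * ‖x‖ := by linarith [hτ_eq]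
  rw [hσ]
  exact key_c α ε γ ‖x‖ τ y.1 ‖y.2‖ _ hγ hB0 hB1 (le_max_left _ _) (le_max_right _ _)

/-- Prox of the perspective of the abstract Vapnik function
`φ = α + max(‖·‖ − ε, 0)`: the three remaining regimes. -/
theorem prox_vapnik_cases
    {H : Type*} [NormedAddCommGroup H] [InnerProductSpace ℝ H] [CompleteSpace H]
    (α ε γ : ℝ) (hα : 0 < α) (hε : 0 < ε) (hγ : 0 < γ)
    (φ : H → ℝ) (hφ : ∀ v : H, φ v = α + max (‖v‖ - ε) 0)
    (σ : ℝ) (x : H) :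
    (σ ≤ γ * (α - ε) → γ < ‖x‖ →
      ∀ p : ℝ × H,
        IsProx (fun w => (γ : EReal) * perspR φ w) (σ, x) p ↔
          p = ((0 : ℝ), (1 - γ / ‖x‖) • x)) ∧
    (γ * (α - ε) < σ → ε * σ + γ * (1 + ε * (ε - α)) ≤ ‖x‖ →
      ∀ p : ℝ × H,
        IsProx (fun w => (γ : EReal) * perspR φ w) (σ, x) p ↔
          p = (σ + γ * (ε - α), (1 - γ / ‖x‖) • x)) ∧
    (γ * α < σ + ε * ‖x‖ → ε * (σ - γ * α) < ‖x‖ →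
      ‖x‖ < ε * σ + γ * (1 + ε * (ε - α)) →
      ∀ p : ℝ × H,
        IsProx (fun w => (γ : EReal) * perspR φ w) (σ, x) p ↔
          p = ((σ + ε * ‖x‖ - γ * α) / (1 + ε ^ 2),
            ((σ + ε * ‖x‖ - γ * α) / (1 + ε ^ 2)) • ((ε / ‖x‖) • x))) := by
  refine ⟨fun h1 h2 p => ?_, fun h1 h2 p => ?_, fun h1 h2 h3 p => ?_⟩
  · rw [isProx_iff α ε γ hε hγ φ hφ σ x p]
    constructor
    · rintro ⟨hp, hmin⟩
      exact uniq_min α ε γ σ hγ.le x p ((0 : ℝ), (1 - γ / ‖x‖) • x) hp le_rfl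
        hmin (min_a α ε γ σ hγ x h1 h2)
    · rintro rfl
      exact ⟨le_rfl, min_a α ε γ σ hγ x h1 h2⟩
  · rw [isProx_iff α ε γ hε hγ φ hφ σ x p]
    have hq1 : (0 : ℝ) ≤ σ + γ * (ε - α) := by nlinarith
    constructor
    · rintro ⟨hp, hmin⟩
      exact uniq_min α ε γ σ hγ.le x p ((σ + γ * (ε - α) : ℝ), (1 - γ / ‖x‖) • x) hp hq1
        hmin (min_b α ε γ σ hε hγ x h1 h2)
    · rintro rfl
      exact ⟨hq1, min_b α ε γ σ hε hγ x h1 h2⟩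
  · rw [isProx_iff α ε γ hε hγ φ hφ σ x p]
    have hq1 : (0 : ℝ) ≤ (σ + ε * ‖x‖ - γ * α) / (1 + ε ^ 2) :=
      le_of_lt (div_pos (by linarith) (by positivity))
    constructor
    · rintro ⟨hp, hmin⟩
      exact uniq_min α ε γ σ hγ.le x p
        ((σ + ε * ‖x‖ - γ * α) / (1 + ε ^ 2),
          ((σ + ε * ‖x‖ - γ * α) / (1 + ε ^ 2)) • ((ε / ‖x‖) • x)) hp hq1
        hmin (min_c α ε γ σ hε hγ x h1 h2 h3)
    · rintro rfl
      exact ⟨hq1, min_c α ε γ σ hε hγ x h1 h2 h3⟩
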